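/- On a lattice of qubits, let A be a group of finitely supported Pauli operators that is invariant under translation along a 1-dimensional direction and is the commutant (within the Pauli group, modulo phases) of a locally generated algebra. If C is a Clifford circuit such that C A C† is generated by single-qubit Z operators and two-qubit Z⊗Z operators, then whenever Z_x Z_{x+c} ∈ C A C† with c ≠ 0 and translation invariance gives Z_x Z_{x+nc} ∈ C A C† for all integers n, one must in fact have the single-qubit operator Z_x ∈ C A C†. -/

import Mathlib

/-!
STATEMENT 15: on a 1D-translation-invariant lattice of qubits (`ℤ × Q0`), Pauli operators
modulo phase are finitely supported functions to `F₂ × F₂` (X- and Z-parts), with the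
symplectic form `ω` detecting (anti)commutation.  Let `B = C A C†` be the image under a
Clifford circuit of a translation-invariant Pauli group `A` that is the commutant of a
locally generated algebra; abstractly, `B` is the commutant of a translation-invariant
set `S` of Paulis with uniformly bounded support diameter.  If `Z_x Z_{x+nc} ∈ B` for all
integers `n` (coming from `Z_x Z_{x+c} ∈ B`, `c ≠ 0`, and translation invariance), then
the single-qubit operator `Z_x ∈ B`.
-/

noncomputable section

/-- a Pauli operator modulo phase: finitely supported X- and Z-parts -/
abbrev PauliF (Q0 : Type*) := (ℤ × Q0) →₀ (ZMod 2 × ZMod 2)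

/-- the symplectic form: `0` iff the two Paulis commute -/
def omegaF {Q0 : Type*} (p q : PauliF Q0) : ZMod 2 :=
  p.sum fun u v => v.1 * (q u).2 + v.2 * (q u).1

/-- the commutant (within the Pauli group modulo phase) of the set `S` -/
def CommutantF {Q0 : Type*} (S : Set (PauliF Q0)) : Set (PauliF Q0) :=
  {p | ∀ s ∈ S, omegaF p s = 0}

/-- translation by `m` along the 1D direction -/
noncomputable def shiftF {Q0 : Type*} (m : ℤ) (p : PauliF Q0) : PauliF Q0 :=
  Finsupp.mapDomain (fun u => (u.1 + m, u.2)) p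

lemma omegaF_single {Q0 : Type*} (u : ℤ × Q0) (v : ZMod 2 × ZMod 2) (s : PauliF Q0) :
    omegaF (Finsupp.single u v) s = v.1 * (s u).2 + v.2 * (s u).1 := by
  unfold omegaF
  rw [Finsupp.sum_single_index]
  simp

lemma omegaF_add {Q0 : Type*} (p q s : PauliF Q0) :
    omegaF (p + q) s = omegaF p s + omegaF q s := by
  unfold omegaF
  rw [Finsupp.sum_add_index']
  · intro u; simp
  · intro u v w; simp [Prod.fst_add, Prod.snd_add]; ring

theorem stmt_15 {Q0 : Type*} [Fintype Q0] [DecidableEq Q0]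
    (S : Set (PauliF Q0)) (D : ℤ)
    -- S is locally generated: uniformly bounded support diameters
    (hbdd : ∀ s ∈ S, ∀ u ∈ s.support, ∀ u' ∈ s.support, |u.1 - u'.1| ≤ D)
    -- S is translation invariant
    (hTI : ∀ m : ℤ, ∀ s ∈ S, shiftF m s ∈ S)
    (x : ℤ × Q0) (c : ℤ) (hc : c ≠ 0)
    -- Z_x Z_{x+nc} lies in the commutant B = C A C† for every n
    (hZZ : ∀ n : ℤ,
      Finsupp.single x ((0 : ZMod 2), (1 : ZMod 2)) +
        Finsupp.single (x.1 + n * c, x.2) ((0 : ZMod 2), (1 : ZMod 2)) ∈ CommutantF S) :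
    Finsupp.single x ((0 : ZMod 2), (1 : ZMod 2)) ∈ CommutantF S := by
  intro s hs
  set n : ℤ := |D| + 1 with hn
  set y : ℤ × Q0 := (x.1 + n * c, x.2) with hy
  have key := hZZ n s hs
  have key' := key
  rw [omegaF_add, omegaF_single, omegaF_single] at key'
  simp only [zero_mul, one_mul, zero_add] at key'
  rw [omegaF_single]
  simp only [zero_mul, one_mul, zero_add]
  by_contra h
  have hsx : (s x).1 = (s y).1 := by
    have : (s y).1 = -(s x).1 := by linear_combination key'
    rw [this]
    exact (CharTwo.neg_eq _).symm
  have hxs : x ∈ s.support := by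
    simp only [Finsupp.mem_support_iff]
    intro h0; apply h; rw [h0]; rfl
  have hys : y ∈ s.support := by
    simp only [Finsupp.mem_support_iff]
    intro h0; apply h; rw [hsx, h0]; rfl
  have hb := hbdd s hs x hxs y hys
  have : |x.1 - y.1| = |n * c| := by
    simp [hy, abs_sub_comm]
  rw [this] at hb
  have h1 : (1:ℤ) ≤ |c| := Int.one_le_abs hc
  have h2 : |n * c| = n * |c| := by
    rw [abs_mul, abs_of_nonneg]; positivity
  nlinarith [abs_nonneg D, abs_nonneg c, le_abs_self D]

end
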